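/- Let X_1, ..., X_n be independent {0,1}-valued random variables, each with Pr[X_i = 1] = p, where 0 < p ≤ 1/2. Then for every real δ with sqrt(3/(n·p)) < δ < 1/2, Pr[ Σ_{i=1}^n X_i ≤ (1-δ)·n·p ] ≥ exp(-9·n·p·δ²). -/

import Mathlib

open MeasureTheory ProbabilityTheory

section Aux
open Real Filter Nat


lemma my_stirling_lb (k : ℕ) (hk : k ≠ 0) :
    Real.sqrt Real.pi * (Real.sqrt (2*k) * ((k:ℝ)/Real.exp 1)^k) ≤ (k ! : ℝ) := by
  obtain ⟨m, rfl⟩ := Nat.exists_eq_succ_of_ne_zero hk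
  have hpos : 0 < Real.sqrt (2*(m+1 : ℕ)) * (((m+1 : ℕ):ℝ)/Real.exp 1)^(m+1) := by
    have : (0:ℝ) < ((m+1 : ℕ):ℝ) := by positivity
    positivity
  have hle : Real.sqrt Real.pi ≤ Stirling.stirlingSeq (m+1) := by
    refine le_of_tendsto (Stirling.tendsto_stirlingSeq_sqrt_pi.comp (tendsto_add_atTop_nat 1)) ?_
    filter_upwards [eventually_ge_atTop m] with b hb
    exact Stirling.stirlingSeq'_antitone hb
  rw [Stirling.stirlingSeq, le_div_iff₀ hpos] at hle
  exact_mod_cast hle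

lemma my_stirling_ub (k : ℕ) (hk : k ≠ 0) :
    (k ! : ℝ) ≤ (Real.exp 1 / Real.sqrt 2) * (Real.sqrt (2*k) * ((k:ℝ)/Real.exp 1)^k) := by
  obtain ⟨m, rfl⟩ := Nat.exists_eq_succ_of_ne_zero hk
  have hpos : 0 < Real.sqrt (2*(m+1 : ℕ)) * (((m+1 : ℕ):ℝ)/Real.exp 1)^(m+1) := by
    have : (0:ℝ) < ((m+1 : ℕ):ℝ) := by positivity
    positivity
  have hle : Stirling.stirlingSeq (m+1) ≤ Real.exp 1 / Real.sqrt 2 := by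
    rw [← Stirling.stirlingSeq_one]
    exact Stirling.stirlingSeq'_antitone (Nat.zero_le m)
  rw [Stirling.stirlingSeq, div_le_iff₀ hpos] at hle
  exact_mod_cast hle

lemma fact_lb (k : ℕ) (hk : k ≠ 0) :
    2 * (Real.sqrt k * ((k:ℝ)/Real.exp 1)^k) ≤ (k ! : ℝ) := by
  refine le_trans ?_ (my_stirling_lb k hk)
  have h1 : Real.sqrt (2*k) = Real.sqrt 2 * Real.sqrt k := Real.sqrt_mul (by norm_num) _
  have h2 : (2:ℝ) ≤ Real.sqrt Real.pi * Real.sqrt 2 := by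
    rw [← Real.sqrt_mul Real.pi_pos.le]
    have : (2:ℝ) = Real.sqrt 4 := by
      rw [show (4:ℝ) = 2^2 by norm_num, Real.sqrt_sq (by norm_num)]
    rw [this]
    exact Real.sqrt_le_sqrt (by nlinarith [Real.pi_gt_three])
  have h3 : 0 ≤ Real.sqrt (k:ℝ) * ((k:ℝ)/Real.exp 1)^k := by positivity
  calc 2 * (Real.sqrt k * ((k:ℝ)/Real.exp 1)^k)
      ≤ (Real.sqrt Real.pi * Real.sqrt 2) * (Real.sqrt k * ((k:ℝ)/Real.exp 1)^k) :=
        mul_le_mul_of_nonneg_right h2 h3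
    _ = Real.sqrt Real.pi * (Real.sqrt (2*k) * ((k:ℝ)/Real.exp 1)^k) := by rw [h1]; ring

lemma fact_ub (k : ℕ) (hk : k ≠ 0) :
    (k ! : ℝ) ≤ Real.exp 1 * (Real.sqrt k * ((k:ℝ)/Real.exp 1)^k) := by
  refine le_trans (my_stirling_ub k hk) (le_of_eq ?_)
  have h1 : Real.sqrt (2*k) = Real.sqrt 2 * Real.sqrt k := Real.sqrt_mul (by norm_num) _
  have h2 : Real.sqrt 2 ≠ 0 := by positivity
  rw [h1]
  field_simp

set_option maxHeartbeats 4000000 in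
lemma term_lb (n j : ℕ) (p δ : ℝ) (hp0 : 0 < p) (hp2 : p ≤ 1/2) (hδ0 : 0 < δ) (hδ2 : δ < 1/2)
    (hj1 : 1 ≤ j) (hjn : j < n)
    (hlow : (1-2*δ)*((n:ℝ)*p) ≤ j) (hhigh : (j:ℝ) ≤ (1-δ)*((n:ℝ)*p)) :
    2/Real.exp 1^2 * (1/Real.sqrt ((n:ℝ)*p)) * Real.exp (-(8*((n:ℝ)*p)*δ^2)) ≤
      (n.choose j : ℝ) * p^j * (1-p)^(n-j) := by
  have hq0 : (0:ℝ) < 1 - p := by linarith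
  obtain ⟨k, hjk⟩ : ∃ k, j + k = n := ⟨n - j, by omega⟩
  rw [show n - j = k from by omega]
  have hk1 : 1 ≤ k := by omega
  have hKcast : (k:ℝ) = (n:ℝ) - j := by
    have : (j:ℝ) + k = n := by exact_mod_cast congrArg (Nat.cast : ℕ → ℝ) hjk
    linarith
  have hJ : (0:ℝ) < j := by exact_mod_cast hj1
  have hK : (0:ℝ) < k := by exact_mod_cast hk1
  have hN : (0:ℝ) < n := by exact_mod_cast (by omega : 0 < n)
  have hNp : (0:ℝ) < (n:ℝ)*p := by positivity
  have he : (0:ℝ) < Real.exp 1 := Real.exp_pos 1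
  have hJle : (j:ℝ) ≤ (n:ℝ)*p := le_trans hhigh (by nlinarith)
  have hKle : (k:ℝ) ≤ (n:ℝ) := by rw [hKcast]; linarith
  -- positivity facts
  have hsn : (0:ℝ) < Real.sqrt n := Real.sqrt_pos.mpr hN
  have hsj : (0:ℝ) < Real.sqrt j := Real.sqrt_pos.mpr hJ
  have hsk : (0:ℝ) < Real.sqrt k := Real.sqrt_pos.mpr hK
  have hqn : (0:ℝ) < ((n:ℝ)/Real.exp 1)^n := pow_pos (div_pos hN he) n
  have hqj : (0:ℝ) < ((j:ℝ)/Real.exp 1)^j := pow_pos (div_pos hJ he) j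
  have hqk : (0:ℝ) < ((k:ℝ)/Real.exp 1)^k := pow_pos (div_pos hK he) k
  have hBj : (0:ℝ) < Real.exp 1 * (Real.sqrt j * ((j:ℝ)/Real.exp 1)^j) := by
    exact mul_pos he (mul_pos hsj hqj)
  have hBk : (0:ℝ) < Real.exp 1 * (Real.sqrt k * ((k:ℝ)/Real.exp 1)^k) := by
    exact mul_pos he (mul_pos hsk hqk)
  have hfj : (0:ℝ) < (j ! : ℝ) := by exact_mod_cast j.factorial_pos
  have hfk : (0:ℝ) < (k ! : ℝ) := by exact_mod_cast k.factorial_pos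
  have hfactR : (n.choose j : ℝ) * (j ! : ℝ) * (k ! : ℝ) = (n ! : ℝ) := by
    have h := Nat.choose_mul_factorial_mul_factorial hjn.le
    rw [show n - j = k from by omega] at h
    exact_mod_cast congrArg (Nat.cast : ℕ → ℝ) h
  -- exponential bound
  have hx : (0:ℝ) < (n:ℝ)*p/j := div_pos hNp hJ
  have hy : (0:ℝ) < (n:ℝ)*(1-p)/k := div_pos (mul_pos hN hq0) hK
  have hP : Real.exp (-(8*((n:ℝ)*p)*δ^2)) ≤ ((n:ℝ)*p/j)^j * ((n:ℝ)*(1-p)/k)^k := by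
    have hexpx : ((n:ℝ)*p/j)^j = Real.exp (j * Real.log ((n:ℝ)*p/j)) := by
      rw [← Real.log_pow, Real.exp_log (pow_pos hx j)]
    have hexpy : ((n:ℝ)*(1-p)/k)^k = Real.exp (k * Real.log ((n:ℝ)*(1-p)/k)) := by
      rw [← Real.log_pow, Real.exp_log (pow_pos hy k)]
    rw [hexpx, hexpy, ← Real.exp_add]
    apply Real.exp_le_exp.mpr
    have hlx : Real.log ((n:ℝ)*p/j) = - Real.log ((j:ℝ)/((n:ℝ)*p)) := by
      rw [← Real.log_inv, inv_div]
    have hly : Real.log ((n:ℝ)*(1-p)/k) = - Real.log ((k:ℝ)/((n:ℝ)*(1-p))) := by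
      rw [← Real.log_inv, inv_div]
    rw [hlx, hly]
    have l1 : Real.log ((j:ℝ)/((n:ℝ)*p)) ≤ (j:ℝ)/((n:ℝ)*p) - 1 :=
      Real.log_le_sub_one_of_pos (div_pos hJ hNp)
    have l2 : Real.log ((k:ℝ)/((n:ℝ)*(1-p))) ≤ (k:ℝ)/((n:ℝ)*(1-p)) - 1 :=
      Real.log_le_sub_one_of_pos (div_pos hK (mul_pos hN hq0))
    have m1 : (j:ℝ) * Real.log ((j:ℝ)/((n:ℝ)*p)) ≤ (j:ℝ) * ((j:ℝ)/((n:ℝ)*p) - 1) :=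
      mul_le_mul_of_nonneg_left l1 hJ.le
    have m2 : (k:ℝ) * Real.log ((k:ℝ)/((n:ℝ)*(1-p))) ≤ (k:ℝ) * ((k:ℝ)/((n:ℝ)*(1-p)) - 1) :=
      mul_le_mul_of_nonneg_left l2 hK.le
    have e1 : (j:ℝ) * ((j:ℝ)/((n:ℝ)*p) - 1) + (k:ℝ) * ((k:ℝ)/((n:ℝ)*(1-p)) - 1)
        = ((n:ℝ)*p - j)^2 / ((n:ℝ)*p*(1-p)) := by
      rw [hKcast]
      field_simp
      ring
    have e2 : ((n:ℝ)*p - j)^2 / ((n:ℝ)*p*(1-p)) ≤ 8*((n:ℝ)*p)*δ^2 := by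
      have hd : (0:ℝ) < (n:ℝ)*p*(1-p) := by positivity
      rw [div_le_iff₀ hd]
      have hu1 : δ*((n:ℝ)*p) ≤ (n:ℝ)*p - j := by nlinarith
      have hu2 : (n:ℝ)*p - j ≤ 2*δ*((n:ℝ)*p) := by nlinarith
      have hu0 : (0:ℝ) ≤ (n:ℝ)*p - j := le_trans (by positivity) hu1
      have hsq : ((n:ℝ)*p - j)^2 ≤ 4*δ^2*((n:ℝ)*p)^2 := by nlinarith
      have h8 : (0:ℝ) ≤ δ^2*((n:ℝ)*p)^2*(1-2*p) :=
        mul_nonneg (mul_nonneg (sq_nonneg δ) (sq_nonneg _)) (by linarith)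
      nlinarith [hsq, h8]
    have sum_le : (j:ℝ) * Real.log ((j:ℝ)/((n:ℝ)*p)) + (k:ℝ) * Real.log ((k:ℝ)/((n:ℝ)*(1-p)))
        ≤ 8*((n:ℝ)*p)*δ^2 := by
      calc (j:ℝ) * Real.log ((j:ℝ)/((n:ℝ)*p)) + (k:ℝ) * Real.log ((k:ℝ)/((n:ℝ)*(1-p)))
          ≤ (j:ℝ) * ((j:ℝ)/((n:ℝ)*p) - 1) + (k:ℝ) * ((k:ℝ)/((n:ℝ)*(1-p)) - 1) := add_le_add m1 m2
        _ = ((n:ℝ)*p - j)^2 / ((n:ℝ)*p*(1-p)) := e1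
        _ ≤ 8*((n:ℝ)*p)*δ^2 := e2
    linarith [sum_le]
  -- choose lower bound
  have hchoose : (2 * (Real.sqrt n * ((n:ℝ)/Real.exp 1)^n)) /
      ((Real.exp 1 * (Real.sqrt j * ((j:ℝ)/Real.exp 1)^j)) *
       (Real.exp 1 * (Real.sqrt k * ((k:ℝ)/Real.exp 1)^k)))
      ≤ (n.choose j : ℝ) := by
    have h2 : (j ! : ℝ) * (k ! : ℝ) ≤
        (Real.exp 1 * (Real.sqrt j * ((j:ℝ)/Real.exp 1)^j)) *
        (Real.exp 1 * (Real.sqrt k * ((k:ℝ)/Real.exp 1)^k)) :=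
      mul_le_mul (fact_ub j (by omega)) (fact_ub k (by omega)) hfk.le hBj.le
    calc (2 * (Real.sqrt n * ((n:ℝ)/Real.exp 1)^n)) /
      ((Real.exp 1 * (Real.sqrt j * ((j:ℝ)/Real.exp 1)^j)) *
       (Real.exp 1 * (Real.sqrt k * ((k:ℝ)/Real.exp 1)^k)))
        ≤ (n ! : ℝ) / ((j ! : ℝ) * (k ! : ℝ)) :=
          div_le_div₀ (by positivity) (fact_lb n (by omega)) (by positivity) h2
      _ = (n.choose j : ℝ) := by rw [← hfactR]; field_simp
  -- product identity
  have hprod : (2 * (Real.sqrt n * ((n:ℝ)/Real.exp 1)^n)) /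
      ((Real.exp 1 * (Real.sqrt j * ((j:ℝ)/Real.exp 1)^j)) *
       (Real.exp 1 * (Real.sqrt k * ((k:ℝ)/Real.exp 1)^k))) * (p^j * (1-p)^k)
      = (2 * Real.sqrt n / (Real.exp 1^2 * (Real.sqrt j * Real.sqrt k))) *
        (((n:ℝ)*p/j)^j * ((n:ℝ)*(1-p)/k)^k) := by
    have hnn : ((n:ℝ))^n = (n:ℝ)^j * (n:ℝ)^k := by rw [← pow_add, hjk]
    have hen : (Real.exp 1)^n = (Real.exp 1)^j * (Real.exp 1)^k := by rw [← pow_add, hjk]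
    have hJ' : (j:ℝ) ≠ 0 := hJ.ne'
    have hK' : (k:ℝ) ≠ 0 := hK.ne'
    have he' : Real.exp 1 ≠ 0 := he.ne'
    have hsj' : Real.sqrt j ≠ 0 := hsj.ne'
    have hsk' : Real.sqrt k ≠ 0 := hsk.ne'
    simp only [div_pow, mul_pow, hnn, hen]
    field_simp
  -- scalar bound
  have hS : 2/Real.exp 1^2 * (1/Real.sqrt ((n:ℝ)*p)) ≤
      2 * Real.sqrt n / (Real.exp 1^2 * (Real.sqrt j * Real.sqrt k)) := by
    clear hP hprod hchoose hfactR
    have h1 : Real.sqrt j ≤ Real.sqrt ((n:ℝ)*p) := Real.sqrt_le_sqrt hJle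
    have h2 : Real.sqrt k ≤ Real.sqrt (n:ℝ) := Real.sqrt_le_sqrt hKle
    have hsnp : (0:ℝ) < Real.sqrt ((n:ℝ)*p) := Real.sqrt_pos.mpr hNp
    have he2 : (0:ℝ) < Real.exp 1^2 := pow_pos he 2
    have hd1 : (0:ℝ) < Real.exp 1^2 * Real.sqrt ((n:ℝ)*p) := mul_pos he2 hsnp
    have hd2 : (0:ℝ) < Real.exp 1^2 * (Real.sqrt j * Real.sqrt k) :=
      mul_pos he2 (mul_pos hsj hsk)
    rw [_root_.div_mul_div_comm, mul_one, div_le_div_iff₀ hd1 hd2]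
    have hkey : Real.sqrt j * Real.sqrt k ≤ Real.sqrt ((n:ℝ)*p) * Real.sqrt n :=
      mul_le_mul h1 h2 hsk.le hsnp.le
    have := mul_le_mul_of_nonneg_left hkey (by linarith : (0:ℝ) ≤ 2 * Real.exp 1^2)
    nlinarith [this]
  -- combine
  have hS0 : (0:ℝ) ≤ 2 * Real.sqrt n / (Real.exp 1^2 * (Real.sqrt j * Real.sqrt k)) := by positivity
  calc 2/Real.exp 1^2 * (1/Real.sqrt ((n:ℝ)*p)) * Real.exp (-(8*((n:ℝ)*p)*δ^2))
      ≤ (2 * Real.sqrt n / (Real.exp 1^2 * (Real.sqrt j * Real.sqrt k))) *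
        (((n:ℝ)*p/j)^j * ((n:ℝ)*(1-p)/k)^k) :=
        mul_le_mul hS hP (Real.exp_pos _).le hS0
    _ = (2 * (Real.sqrt n * ((n:ℝ)/Real.exp 1)^n)) /
      ((Real.exp 1 * (Real.sqrt j * ((j:ℝ)/Real.exp 1)^j)) *
       (Real.exp 1 * (Real.sqrt k * ((k:ℝ)/Real.exp 1)^k))) * (p^j * (1-p)^k) := hprod.symm
    _ ≤ (n.choose j : ℝ) * (p^j * (1-p)^k) := mul_le_mul_of_nonneg_right hchoose (by positivity)
    _ = (n.choose j : ℝ) * p^j * (1-p)^k := by ring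

set_option maxHeartbeats 1000000 in
lemma sum_lb (n : ℕ) (p δ : ℝ) (hp0 : 0 < p) (hp2 : p ≤ 1/2) (hδ0 : 0 < δ) (hδ2 : δ < 1/2)
    (h3 : 3 < (n:ℝ)*p*δ^2) :
    Real.exp (-(9*((n:ℝ)*p)*δ^2)) ≤
      ∑ j ∈ Finset.Icc ⌈(1-2*δ)*((n:ℝ)*p)⌉₊ ⌊(1-δ)*((n:ℝ)*p)⌋₊,
        (n.choose j : ℝ) * p^j * (1-p)^(n-j) := by
  have hNp : (0:ℝ) < (n:ℝ)*p := by nlinarith [sq_nonneg δ]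
  have hN : (0:ℝ) < n := by
    rcases Nat.eq_zero_or_pos n with h | h
    · exfalso; rw [h] at hNp; simp at hNp
    · exact_mod_cast h
  have hδnp : 6 < δ*((n:ℝ)*p) := by nlinarith
  set k0 := ⌈(1-2*δ)*((n:ℝ)*p)⌉₊ with hk0def
  set k1 := ⌊(1-δ)*((n:ℝ)*p)⌋₊ with hk1def
  have hlow0 : (0:ℝ) < (1-2*δ)*((n:ℝ)*p) := by nlinarith
  have hhigh0 : (0:ℝ) ≤ (1-δ)*((n:ℝ)*p) := by nlinarith
  have hk0ge : (1-2*δ)*((n:ℝ)*p) ≤ k0 := Nat.le_ceil _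
  have hk0le : (k0:ℝ) ≤ (1-2*δ)*((n:ℝ)*p) + 1 := (Nat.ceil_lt_add_one hlow0.le).le
  have hk1le : (k1:ℝ) ≤ (1-δ)*((n:ℝ)*p) := Nat.floor_le hhigh0
  have hk1ge : (1-δ)*((n:ℝ)*p) - 1 < k1 := by
    have := Nat.lt_floor_add_one ((1-δ)*((n:ℝ)*p)); linarith
  have hk01 : k0 ≤ k1 := by
    have : (k0:ℝ) ≤ (k1:ℝ) := by nlinarith
    exact_mod_cast this
  have hk0pos : 1 ≤ k0 := Nat.one_le_iff_ne_zero.mpr (by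
    intro h
    rw [hk0def] at h
    have := Nat.ceil_eq_zero.mp h
    linarith)
  have hcard : (((Finset.Icc k0 k1).card : ℕ) : ℝ) = (k1:ℝ) - k0 + 1 := by
    rw [Nat.card_Icc]
    push_cast [Nat.cast_sub (by omega : k0 ≤ k1 + 1)]
    ring
  set b := 2/Real.exp 1^2 * (1/Real.sqrt ((n:ℝ)*p)) * Real.exp (-(8*((n:ℝ)*p)*δ^2)) with hbdef
  have hb0 : 0 ≤ b := by positivity
  have hterm : ∀ j ∈ Finset.Icc k0 k1, b ≤ (n.choose j : ℝ) * p^j * (1-p)^(n-j) := by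
    intro j hj
    rw [Finset.mem_Icc] at hj
    have hjlow : (1-2*δ)*((n:ℝ)*p) ≤ j := le_trans hk0ge (by exact_mod_cast hj.1)
    have hjhigh : (j:ℝ) ≤ (1-δ)*((n:ℝ)*p) := le_trans (by exact_mod_cast hj.2) hk1le
    have hjn : j < n := by
      have : (j:ℝ) < n := by nlinarith
      exact_mod_cast this
    exact term_lb n j p δ hp0 hp2 hδ0 hδ2 (le_trans hk0pos hj.1) hjn hjlow hjhigh
  have hsum := Finset.card_nsmul_le_sum (Finset.Icc k0 k1) _ b hterm
  rw [nsmul_eq_mul] at hsum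
  refine le_trans ?_ hsum
  -- numeric part
  set s := Real.sqrt ((n:ℝ)*p) with hsdef
  have hs2 : s^2 = (n:ℝ)*p := Real.sq_sqrt hNp.le
  have hs0 : 0 < s := Real.sqrt_pos.mpr hNp
  have hs3 : 3 < s := by nlinarith
  have hδs : 1.7 ≤ δ*s := by nlinarith [mul_nonneg hδ0.le hs0.le]
  have hnum : s + 1 ≤ δ*((n:ℝ)*p) := by nlinarith [mul_nonneg (by linarith : (0:ℝ) ≤ δ*s - 1.7) hs0.le]
  have hcardge : δ*((n:ℝ)*p) - 1 ≤ ((Finset.Icc k0 k1).card : ℝ) := by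
    rw [hcard]; nlinarith
  have he2 : (0:ℝ) < Real.exp 1^2 := pow_pos (Real.exp_pos 1) 2
  have he8 : Real.exp 1^2 ≤ 8 := by nlinarith [Real.exp_one_lt_d9, Real.exp_pos 1]
  have hexp8 : (8:ℝ) ≤ Real.exp 3 := by
    have h2e : (2:ℝ) ≤ Real.exp 1 := by nlinarith [Real.exp_one_gt_d9]
    calc (8:ℝ) = 2^3 := by norm_num
      _ ≤ (Real.exp 1)^3 := by gcongr
      _ = Real.exp 3 := by rw [Real.exp_one_pow]; norm_num
  have hA : Real.exp (-(((n:ℝ)*p)*δ^2)) ≤ 1/8 := by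
    calc Real.exp (-(((n:ℝ)*p)*δ^2)) ≤ Real.exp (-3) := Real.exp_le_exp.mpr (by linarith)
      _ = 1/Real.exp 3 := by rw [Real.exp_neg]; ring
      _ ≤ 1/8 := by
        apply one_div_le_one_div_of_le (by norm_num) hexp8
  have hc : 1/4 ≤ (δ*((n:ℝ)*p) - 1) * (2/Real.exp 1^2 * (1/s)) := by
    have step1 : s * (2/Real.exp 1^2 * (1/s)) ≤ (δ*((n:ℝ)*p) - 1) * (2/Real.exp 1^2 * (1/s)) := by
      apply mul_le_mul_of_nonneg_right (by linarith) (by positivity)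
    have step2 : s * (2/Real.exp 1^2 * (1/s)) = 2/Real.exp 1^2 := by
      field_simp
    have step3 : (1:ℝ)/4 ≤ 2/Real.exp 1^2 := by
      rw [div_le_div_iff₀ (by norm_num) he2]; linarith
    linarith
  have hkey : Real.exp (-(9*((n:ℝ)*p)*δ^2)) ≤ (δ*((n:ℝ)*p) - 1) * b := by
    have hsplit : Real.exp (-(9*((n:ℝ)*p)*δ^2)) =
        Real.exp (-(((n:ℝ)*p)*δ^2)) * Real.exp (-(8*((n:ℝ)*p)*δ^2)) := by
      rw [← Real.exp_add]; ring_nf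
    rw [hsplit, hbdef]
    calc Real.exp (-(((n:ℝ)*p)*δ^2)) * Real.exp (-(8*((n:ℝ)*p)*δ^2))
        ≤ ((δ*((n:ℝ)*p) - 1) * (2/Real.exp 1^2 * (1/s))) * Real.exp (-(8*((n:ℝ)*p)*δ^2)) := by
          apply mul_le_mul_of_nonneg_right (le_trans (le_trans hA (by norm_num)) hc)
            (Real.exp_pos _).le
      _ = (δ*((n:ℝ)*p) - 1) * (2/Real.exp 1^2 * (1/s) * Real.exp (-(8*((n:ℝ)*p)*δ^2))) := by ring
  refine le_trans hkey ?_
  apply mul_le_mul_of_nonneg_right hcardge hb0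

end Aux

set_option maxHeartbeats 1000000 in
/-- reverse Chernoff bound for i.i.d. Bernoulli(p) random variables
(Lemma of Klein and Young). -/
theorem reverse_chernoff {Ω : Type*} [MeasurableSpace Ω] (μ : Measure Ω)
    [IsProbabilityMeasure μ] (n : ℕ) (X : Fin n → Ω → ℝ) (p : ℝ)
    (hmeas : ∀ i, Measurable (X i))
    (h01 : ∀ i ω, X i ω = 0 ∨ X i ω = 1)
    (hindep : iIndepFun X μ)
    (hp : ∀ i, μ {ω | X i ω = 1} = ENNReal.ofReal p)
    (hp0 : 0 < p) (hp2 : p ≤ 1 / 2)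
    (δ : ℝ) (hδ1 : Real.sqrt (3 / ((n : ℝ) * p)) < δ) (hδ2 : δ < 1 / 2) :
    ENNReal.ofReal (Real.exp (-9 * (n : ℝ) * p * δ ^ 2)) ≤
      μ {ω | (∑ i, X i ω) ≤ (1 - δ) * (n : ℝ) * p} := by
  classical
  rcases Nat.eq_zero_or_pos n with hn | hn
  · subst hn
    have hset : {ω : Ω | (∑ i, X i ω) ≤ (1 - δ) * ((0:ℕ) : ℝ) * p} = Set.univ := by
      ext ω; simp
    rw [hset, measure_univ]
    simp
  have hδ0 : 0 < δ := lt_of_le_of_lt (Real.sqrt_nonneg _) hδ1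
  have hN : (0:ℝ) < n := by exact_mod_cast hn
  have hNp : (0:ℝ) < (n:ℝ)*p := mul_pos hN hp0
  have h3 : 3 < (n:ℝ)*p*δ^2 := by
    have h := (Real.sqrt_lt' hδ0).mp hδ1
    rw [div_lt_iff₀ hNp] at h
    nlinarith [h]
  set k0 := ⌈(1-2*δ)*((n:ℝ)*p)⌉₊ with hk0def
  set k1 := ⌊(1-δ)*((n:ℝ)*p)⌋₊ with hk1def
  have hhigh0 : (0:ℝ) ≤ (1-δ)*((n:ℝ)*p) := by nlinarith
  set T : Finset (Finset (Fin n)) :=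
    (Finset.Icc k0 k1).biUnion (fun j => Finset.powersetCard j Finset.univ) with hTdef
  set A : Finset (Fin n) → Set Ω := fun s => {ω | ∀ i, X i ω = 1 ↔ i ∈ s} with hAdef
  -- A s as an intersection of preimages
  have hAeq : ∀ s : Finset (Fin n), A s = ⋂ i ∈ (Finset.univ : Finset (Fin n)),
      X i ⁻¹' (if i ∈ s then ({1} : Set ℝ) else ({1} : Set ℝ)ᶜ) := by
    intro s
    ext ω
    simp only [hAdef, Set.mem_setOf_eq, Set.mem_iInter, Finset.mem_univ, forall_const,
      Set.mem_preimage]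
    constructor
    · intro h i
      by_cases hi : i ∈ s
      · simp [hi, (h i).mpr hi]
      · simp only [hi, if_false, Set.mem_compl_iff, Set.mem_singleton_iff]
        intro h1
        exact hi ((h i).mp h1)
    · intro h i
      have hh := h i
      by_cases hi : i ∈ s
      · simp only [hi, if_true, Set.mem_singleton_iff] at hh
        simp [hi, hh]
      · simp only [hi, if_false, Set.mem_compl_iff, Set.mem_singleton_iff] at hh
        simp [hi, hh]
  have hmeasA : ∀ s : Finset (Fin n), MeasurableSet (A s) := by
    intro s
    rw [hAeq s]
    refine Finset.measurableSet_biInter _ (fun i _ => ?_)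
    by_cases hi : i ∈ s
    · simp only [hi, if_true]; exact hmeas i (measurableSet_singleton 1)
    · simp only [hi, if_false]; exact (hmeas i (measurableSet_singleton 1)).compl
  -- measure of each A s
  have hμ1 : ∀ i, μ (X i ⁻¹' {1}) = ENNReal.ofReal p := fun i => hp i
  have hμ0 : ∀ i, μ (X i ⁻¹' ({1} : Set ℝ)ᶜ) = ENNReal.ofReal (1-p) := by
    intro i
    rw [Set.preimage_compl, measure_compl (hmeas i (measurableSet_singleton 1))
      (measure_ne_top μ _), measure_univ, hμ1 i]
    have h := ENNReal.ofReal_sub 1 hp0.le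
    rw [ENNReal.ofReal_one] at h
    exact h.symm
  have hmeasure : ∀ s : Finset (Fin n),
      μ (A s) = ENNReal.ofReal (p ^ s.card * (1-p) ^ (n - s.card)) := by
    intro s
    have hrw := hindep.measure_inter_preimage_eq_mul Finset.univ
      (sets := fun i => if i ∈ s then ({1} : Set ℝ) else ({1} : Set ℝ)ᶜ)
      (fun i _ => by
        by_cases hi : i ∈ s
        · simp only [hi, if_true]; exact measurableSet_singleton 1
        · simp only [hi, if_false]; exact (measurableSet_singleton (1:ℝ)).compl)
    rw [hAeq s, hrw]
    have hfac : ∀ i : Fin n, μ (X i ⁻¹' (if i ∈ s then ({1} : Set ℝ) else ({1} : Set ℝ)ᶜ)) =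
        (if i ∈ s then ENNReal.ofReal p else ENNReal.ofReal (1-p)) := by
      intro i
      by_cases hi : i ∈ s
      · simp only [hi, if_true]; exact hμ1 i
      · simp only [hi, if_false]; exact hμ0 i
    rw [Finset.prod_congr rfl (fun i _ => hfac i), Finset.prod_ite, Finset.prod_const,
      Finset.prod_const, Finset.filter_univ_mem]
    have hcompl : Finset.univ.filter (fun i => i ∉ s) = sᶜ := by
      ext i; simp
    rw [hcompl, Finset.card_compl, Fintype.card_fin]
    rw [← ENNReal.ofReal_pow hp0.le, ← ENNReal.ofReal_pow (by linarith : (0:ℝ) ≤ 1-p),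
      ← ENNReal.ofReal_mul (by positivity)]
  -- pairwise disjointness
  have hdisj : Set.PairwiseDisjoint (↑T) A := by
    intro s _ t _ hst
    refine Set.disjoint_left.mpr (fun ω hωs hωt => hst ?_)
    ext i
    exact ((hωs i).symm.trans (hωt i))
  -- inclusion into the event
  have hsub : (⋃ s ∈ T, A s) ⊆ {ω : Ω | (∑ i, X i ω) ≤ (1 - δ) * (n:ℝ) * p} := by
    intro ω hω
    simp only [Set.mem_iUnion] at hω
    obtain ⟨s, hsT, hωs⟩ := hω
    have hXval : ∀ i, X i ω = if i ∈ s then (1:ℝ) else 0 := by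
      intro i
      by_cases hi : i ∈ s
      · simp [hi, (hωs i).mpr hi]
      · rcases h01 i ω with h | h
        · simp [hi, h]
        · exact absurd ((hωs i).mp h) hi
    have hsum : (∑ i, X i ω) = (s.card : ℝ) := by
      rw [Finset.sum_congr rfl (fun i _ => hXval i), Finset.sum_boole]
      simp [Finset.filter_univ_mem]
    rw [Set.mem_setOf_eq, hsum, mul_assoc]
    have hsT' : s.card ∈ Finset.Icc k0 k1 := by
      rw [hTdef, Finset.mem_biUnion] at hsT
      obtain ⟨j, hj, hsj⟩ := hsT
      rwa [(Finset.mem_powersetCard.mp hsj).2]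
    have h1 := (Finset.mem_Icc.mp hsT').2
    exact le_trans (by exact_mod_cast h1) (Nat.floor_le hhigh0)
  -- disjointness of the powersetCard family
  have hdisjT : Set.PairwiseDisjoint (↑(Finset.Icc k0 k1))
      (fun j => Finset.powersetCard j (Finset.univ : Finset (Fin n))) := by
    intro a _ b _ hab
    refine Finset.disjoint_left.mpr (fun s hsa hsb => hab ?_)
    rw [← (Finset.mem_powersetCard.mp hsa).2, ← (Finset.mem_powersetCard.mp hsb).2]
  -- regrouping the sum
  have hTsum : ∑ j ∈ Finset.Icc k0 k1, (n.choose j : ℝ) * p^j * (1-p)^(n-j)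
      = ∑ s ∈ T, (p ^ s.card * (1-p) ^ (n - s.card)) := by
    rw [hTdef, Finset.sum_biUnion hdisjT]
    refine (Finset.sum_congr rfl (fun j hj => ?_)).symm
    calc ∑ s ∈ Finset.powersetCard j (Finset.univ : Finset (Fin n)),
          (p ^ s.card * (1-p) ^ (n - s.card))
        = ∑ _s ∈ Finset.powersetCard j (Finset.univ : Finset (Fin n)), (p^j * (1-p)^(n-j)) :=
          Finset.sum_congr rfl (fun s hs => by rw [(Finset.mem_powersetCard.mp hs).2])
      _ = (n.choose j : ℝ) * (p^j * (1-p)^(n-j)) := by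
          rw [Finset.sum_const, Finset.card_powersetCard, Finset.card_univ, Fintype.card_fin,
            nsmul_eq_mul]
      _ = (n.choose j : ℝ) * p^j * (1-p)^(n-j) := by ring
  -- final chain
  calc ENNReal.ofReal (Real.exp (-9 * (n:ℝ) * p * δ^2))
      ≤ ENNReal.ofReal (∑ s ∈ T, (p ^ s.card * (1-p) ^ (n - s.card))) := by
        apply ENNReal.ofReal_le_ofReal
        rw [← hTsum]
        calc Real.exp (-9 * (n:ℝ) * p * δ^2) = Real.exp (-(9*((n:ℝ)*p)*δ^2)) := by ring_nf
          _ ≤ _ := sum_lb n p δ hp0 hp2 hδ0 hδ2 h3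
    _ = ∑ s ∈ T, ENNReal.ofReal (p ^ s.card * (1-p) ^ (n - s.card)) :=
        ENNReal.ofReal_sum_of_nonneg (fun s _ => mul_nonneg (pow_nonneg hp0.le _) (pow_nonneg (by linarith : (0:ℝ) ≤ 1-p) _))
    _ = ∑ s ∈ T, μ (A s) := Finset.sum_congr rfl (fun s _ => (hmeasure s).symm)
    _ = μ (⋃ s ∈ T, A s) := (measure_biUnion_finset hdisj (fun s _ => hmeasA s)).symm
    _ ≤ μ {ω : Ω | (∑ i, X i ω) ≤ (1 - δ) * (n:ℝ) * p} := measure_mono hsub
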